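/- arXiv:2305.05855 — 3 statements merged into one kernel-verified Lean document; each statement's English description precedes it below -/
import Mathlib

section
/- If u is analytic in the annulus r^{-1} ≤ |z| ≤ r for some r > 1, then the trapezoidal-rule error satisfies T_n(u) − I(u) = ∮_{|z|=r} u(z)/(z^n−1) dz/(iz) + ∮_{|z|=r^{-1}} u(z)/(z^{−n}−1) dz/(iz), and consequently |T_n(u) − I(u)| ≤ C r^{−n} for a constant C depending only on r and sup_{r^{-1}≤|z|≤r} |u(z)|. -/
open scoped Real
open Complex intervalIntegral

/-- The trapezoidal rule `T_n(u) = (2π/n) ∑_{k=1}^n u(e^{2πik/n})`. -/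
noncomputable def trap (n : ℕ) (u : ℂ → ℂ) : ℂ :=
  ((2 * π / n : ℝ) : ℂ) * ∑ k ∈ Finset.range n,
    u (Complex.exp (2 * π * Complex.I * ((k : ℂ) + 1) / n))

/-- `I(u) = ∫_0^{2π} u(e^{it}) dt = ∮_{|z|=1} u(z) dz/(iz)`. -/
noncomputable def circInt (u : ℂ → ℂ) : ℂ :=
  ∫ t in (0:ℝ)..(2 * π), u (Complex.exp (Complex.I * t))

/-- `∮_{|z|=ρ} f(z) dz/(iz)`, written via the parameterization `z = ρ e^{it}`. -/
noncomputable def circleIntDivIz (ρ : ℝ) (f : ℂ → ℂ) : ℂ :=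
  ∫ t in (0:ℝ)..(2 * π), f ((ρ : ℂ) * Complex.exp (Complex.I * t))

section Aux
open Metric Set


lemma circleIntDivIz_eq (f : ℂ → ℂ) {ρ : ℝ} (hρ : 0 < ρ) :
    circleIntDivIz ρ f = ∮ z in C(0, ρ), (Complex.I * z)⁻¹ * f z := by
  unfold circleIntDivIz circleIntegral
  apply intervalIntegral.integral_congr
  intro θ _
  have hz : circleMap 0 ρ θ ≠ 0 := circleMap_ne_center (ne_of_gt hρ)
  simp only [deriv_circleMap, smul_eq_mul, circleMap_sub_center]
  rw [circleMap_zero] at *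
  rw [mul_comm Complex.I (θ:ℂ)]
  field_simp
  rw [mul_div_cancel_left₀ _ (by exact_mod_cast hρ.ne' : (ρ:ℂ) ≠ 0)]

lemma my_circleIntegral_add {f g : ℂ → ℂ} {c : ℂ} {R : ℝ}
    (hf : CircleIntegrable f c R) (hg : CircleIntegrable g c R) :
    (∮ z in C(c, R), (f z + g z)) = (∮ z in C(c, R), f z) + ∮ z in C(c, R), g z := by
  simp only [circleIntegral, smul_add]
  exact intervalIntegral.integral_add hf.out hg.out

lemma my_circleIntegral_neg (f : ℂ → ℂ) (c : ℂ) (R : ℝ) :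
    (∮ z in C(c, R), -(f z)) = -∮ z in C(c, R), f z := by
  simp only [circleIntegral, smul_neg]
  exact intervalIntegral.integral_neg

lemma my_circleIntegral_sum {ι : Type*} (s : Finset ι) (f : ι → ℂ → ℂ) {c : ℂ} {R : ℝ}
    (h : ∀ i ∈ s, CircleIntegrable (f i) c R) :
    (∮ z in C(c, R), ∑ i ∈ s, f i z) = ∑ i ∈ s, ∮ z in C(c, R), f i z := by
  simp only [circleIntegral, Finset.smul_sum]
  exact intervalIntegral.integral_finset_sum fun i hi => (h i hi).out

lemma my_deform {a b : ℝ} (h0 : 0 < a) (hab : a ≤ b) {f : ℂ → ℂ}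
    (hd : ∀ z : ℂ, a ≤ ‖z‖ → ‖z‖ ≤ b → DifferentiableAt ℂ f z) :
    (∮ z in C(0, b), f z) = ∮ z in C(0, a), f z := by
  apply Complex.circleIntegral_eq_of_differentiable_on_annulus_off_countable h0 hab
    Set.countable_empty
  · intro z hz
    obtain ⟨h1, h2⟩ := hz
    rw [mem_closedBall_zero_iff] at h1
    rw [mem_ball_zero_iff, not_lt] at h2
    exact (hd z h2 h1).continuousAt.continuousWithinAt
  · intro z hz
    obtain ⟨⟨h1, h2⟩, -⟩ := hz
    rw [mem_ball_zero_iff] at h1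
    rw [mem_closedBall_zero_iff, not_le] at h2
    exact hd z h2.le h1.le

lemma analyticAt_dslope {g : ℂ → ℂ} {ω : ℂ} (hg : AnalyticAt ℂ g ω) :
    AnalyticAt ℂ (dslope g ω) ω := by
  obtain ⟨p, hp⟩ := hg
  exact ⟨p.fslope, hp.has_fpower_series_dslope_fslope⟩

lemma annulus_pole {r : ℝ} (hr : 1 < r) {g : ℂ → ℂ} {ω : ℂ} (hω : ‖ω‖ = 1)
    (hg : ∀ z : ℂ, r⁻¹ ≤ ‖z‖ → ‖z‖ ≤ r → AnalyticAt ℂ g z) :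
    (∮ z in C(0, r), g z / (z - ω)) - (∮ z in C(0, r⁻¹), g z / (z - ω))
      = 2 * π * Complex.I * g ω := by
  have hr0 : (0:ℝ) < r := lt_trans one_pos hr
  have hrinv : (0:ℝ) < r⁻¹ := inv_pos.mpr hr0
  have hrinv1 : r⁻¹ < 1 := inv_lt_one_of_one_lt₀ hr
  -- differentiability of dslope on the annulus
  have hdiff : ∀ z : ℂ, r⁻¹ ≤ ‖z‖ → ‖z‖ ≤ r → DifferentiableAt ℂ (dslope g ω) z := by
    intro z h1 h2
    by_cases hzω : z = ω
    · subst hzω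
      exact (analyticAt_dslope (hg z h1 h2)).differentiableAt
    · exact (differentiableAt_dslope_of_ne hzω).mpr (hg z h1 h2).differentiableAt
  -- on each circle ρ ≠ 1 the integrand splits
  have split : ∀ ρ : ℝ, 0 < ρ → ρ ≠ 1 → r⁻¹ ≤ ρ → ρ ≤ r →
      (∮ z in C(0, ρ), g z / (z - ω))
        = (∮ z in C(0, ρ), dslope g ω z) + g ω * ∮ z in C(0, ρ), (z - ω)⁻¹ := by
    intro ρ hρ hρ1 hρa hρb
    have hsphere : ∀ z ∈ sphere (0:ℂ) ρ, z ≠ ω := by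
      intro z hz h
      rw [mem_sphere_zero_iff_norm] at hz
      rw [h, hω] at hz
      exact hρ1 hz.symm
    have heq : Set.EqOn (fun z : ℂ => g z / (z - ω))
        (fun z : ℂ => dslope g ω z + g ω * (z - ω)⁻¹) (sphere 0 ρ) := by
      intro z hz
      have hzω := hsphere z hz
      have hzsub : z - ω ≠ 0 := sub_ne_zero.mpr hzω
      simp only [dslope_of_ne _ hzω, slope_def_field]
      field_simp
      ring
    rw [circleIntegral.integral_congr hρ.le heq]
    have hcd : ContinuousOn (dslope g ω) (sphere 0 ρ) := by
      intro z hz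
      have : r⁻¹ ≤ ‖z‖ ∧ ‖z‖ ≤ r := by
        rw [mem_sphere_zero_iff_norm] at hz
        constructor <;> rw [hz] <;> [exact hρa; exact hρb]
      exact (hdiff z this.1 this.2).continuousAt.continuousWithinAt
    have hci : ContinuousOn (fun z : ℂ => g ω * (z - ω)⁻¹) (sphere 0 ρ) := by
      apply ContinuousOn.mul continuousOn_const
      apply ContinuousOn.inv₀ (by fun_prop)
      intro z hz
      exact sub_ne_zero.mpr (hsphere z hz)
    rw [my_circleIntegral_add (hcd.circleIntegrable hρ.le) (hci.circleIntegrable hρ.le),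
      circleIntegral.integral_const_mul]
  have h2πI : (∮ z in C(0, r), (z - ω)⁻¹) = 2 * π * Complex.I :=
    circleIntegral.integral_sub_inv_of_mem_ball (by simpa [mem_ball_zero_iff, hω] using hr)
  have hdd : ∀ z : ℂ, ‖z‖ ≤ r⁻¹ → DifferentiableAt ℂ (fun z : ℂ => (z - ω)⁻¹) z := by
    intro z hz
    have : z ≠ ω := fun h => by rw [h, hω] at hz; linarith
    exact (differentiableAt_id.sub_const ω).inv (sub_ne_zero.mpr this)
  have h0 : (∮ z in C(0, r⁻¹), (z - ω)⁻¹) = 0 := by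
    refine Complex.circleIntegral_eq_zero_of_differentiable_on_off_countable (E := ℂ) hrinv.le
      Set.countable_empty (fun z hz => ?_) (fun z hz => ?_)
    · rw [mem_closedBall_zero_iff] at hz
      exact (hdd z hz).continuousAt.continuousWithinAt
    · obtain ⟨hz, -⟩ := hz
      rw [mem_ball_zero_iff] at hz
      exact hdd z hz.le
  have hdef : (∮ z in C(0, r), dslope g ω z) = ∮ z in C(0, r⁻¹), dslope g ω z :=
    my_deform hrinv (by nlinarith) hdiff
  rw [split r hr0 (by linarith) (by nlinarith) le_rfl,
    split r⁻¹ hrinv (by linarith) le_rfl (by nlinarith),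
    h2πI, h0, hdef]
  ring

lemma root_eq' (n : ℕ) (k : ℕ) :
    Complex.exp (2 * π * Complex.I * ((k : ℂ) + 1) / n)
      = Complex.exp (2 * π * Complex.I / n) ^ (k + 1) := by
  rw [← Complex.exp_nat_mul]; congr 1; push_cast; ring

lemma root_norm (n : ℕ) (k : ℕ) (hn : 0 < n) :
    ‖Complex.exp (2 * π * Complex.I * ((k : ℂ) + 1) / n)‖ = 1 := by
  have : 2 * (π:ℂ) * Complex.I * ((k : ℂ) + 1) / n
      = ((2 * π * ((k:ℝ)+1) / n : ℝ) : ℂ) * Complex.I := by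
    push_cast; ring
  rw [this]
  exact Complex.norm_exp_ofReal_mul_I _

lemma root_pow (n : ℕ) (k : ℕ) (hn : 0 < n) :
    (Complex.exp (2 * π * Complex.I * ((k : ℂ) + 1) / n)) ^ n = 1 := by
  rw [← Complex.exp_nat_mul]
  have hne : (n:ℂ) ≠ 0 := Nat.cast_ne_zero.mpr hn.ne'
  have : (n:ℂ) * (2 * π * Complex.I * ((k : ℂ) + 1) / n) = ((k:ℤ)+1) * (2 * π * Complex.I) := by
    field_simp; push_cast; ring
  rw [this]
  exact_mod_cast Complex.exp_int_mul_two_pi_mul_I ((k:ℤ)+1)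

lemma partial_fractions' (n : ℕ) (hn : 0 < n) (z : ℂ) (hz : z ^ n ≠ 1) :
    ∑ k ∈ Finset.range n,
        Complex.exp (2 * π * Complex.I * ((k : ℂ) + 1) / n) /
          (z - Complex.exp (2 * π * Complex.I * ((k : ℂ) + 1) / n))
      = (n : ℂ) / (z ^ n - 1) := by
  set ζ : ℂ := Complex.exp (2 * π * Complex.I / n) with hζdef
  have hprim : IsPrimitiveRoot ζ n := Complex.isPrimitiveRoot_exp n hn.ne'
  have hζn : ζ ^ n = 1 := hprim.pow_eq_one
  have hzn1 : z ^ n - 1 ≠ 0 := sub_ne_zero.mpr hz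
  have hroot : ∀ k : ℕ, (ζ ^ (k + 1)) ^ n = 1 := by
    intro k; rw [← pow_mul, mul_comm, pow_mul, hζn, one_pow]
  have hne : ∀ k : ℕ, z - ζ ^ (k + 1) ≠ 0 := by
    intro k h
    apply hz
    rw [sub_eq_zero] at h
    rw [h, hroot]
  have term : ∀ k ∈ Finset.range n,
      Complex.exp (2 * π * Complex.I * ((k : ℂ) + 1) / n) /
          (z - Complex.exp (2 * π * Complex.I * ((k : ℂ) + 1) / n))
      = (∑ j ∈ Finset.range n, z ^ j * (ζ ^ (k + 1)) ^ (n - j)) / (z ^ n - 1) := by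
    intro k _
    rw [root_eq' n k]
    rw [div_eq_div_iff (hne k) hzn1]
    have hg := geom_sum₂_mul z (ζ ^ (k+1)) n
    rw [hroot k] at hg
    calc ζ ^ (k+1) * (z ^ n - 1) = ζ^(k+1) * ((∑ i ∈ Finset.range n, z ^ i * (ζ^(k+1)) ^ (n - 1 - i)) * (z - ζ^(k+1))) := by rw [hg]
      _ = (∑ j ∈ Finset.range n, z ^ j * (ζ ^ (k + 1)) ^ (n - j)) * (z - ζ ^ (k + 1)) := by
          rw [← mul_assoc, Finset.mul_sum, Finset.sum_mul, Finset.sum_mul]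
          apply Finset.sum_congr rfl
          intro i hi
          have : (n - i) = (n - 1 - i) + 1 := by
            rw [Finset.mem_range] at hi; omega
          rw [this, pow_succ]
          ring
  rw [Finset.sum_congr rfl term, ← Finset.sum_div]
  congr 1
  -- ∑ k ∑ j z^j ζ^{(k+1)(n-j)} = n
  rw [Finset.sum_comm]
  have inner : ∀ j ∈ Finset.range n, ∑ k ∈ Finset.range n, z ^ j * (ζ ^ (k + 1)) ^ (n - j)
      = if j = 0 then (n : ℂ) else 0 := by
    intro j hj
    rw [Finset.mem_range] at hj
    by_cases h0 : j = 0
    · subst h0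
      simp only [Nat.sub_zero, if_true]
      have : ∀ k ∈ Finset.range n, z ^ 0 * (ζ ^ (k+1)) ^ n = 1 := by
        intro k _; rw [hroot k]; ring
      rw [Finset.sum_congr rfl this]
      simp
    · simp only [h0, if_false]
      have hx1 : ζ ^ (n - j) ≠ 1 := by
        intro h
        have := hprim.pow_ne_one_of_pos_of_lt (by omega : n - j ≠ 0) (by omega : n - j < n)
        exact this h
      have hsum : ∑ k ∈ Finset.range n, (ζ ^ (n - j)) ^ k = 0 := by
        rw [geom_sum_eq hx1]
        rw [← pow_mul, mul_comm, pow_mul, hζn, one_pow, sub_self, zero_div]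
      calc ∑ k ∈ Finset.range n, z ^ j * (ζ ^ (k + 1)) ^ (n - j)
          = ∑ k ∈ Finset.range n, (z ^ j * ζ ^ (n-j)) * (ζ ^ (n - j)) ^ k := by
            apply Finset.sum_congr rfl
            intro k _
            rw [← pow_mul, mul_comm (k+1) (n-j), pow_mul, pow_succ']
            ring
        _ = (z ^ j * ζ ^ (n-j)) * ∑ k ∈ Finset.range n, (ζ ^ (n - j)) ^ k := by rw [Finset.mul_sum]
        _ = 0 := by rw [hsum, mul_zero]
  rw [Finset.sum_congr rfl inner]
  simp [Finset.sum_ite_eq', Finset.mem_range, hn]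

lemma pow_ne_one_of_norm {ρ : ℝ} (hρ0 : 0 < ρ) (hρ1 : ρ ≠ 1) {z : ℂ} (hz : ‖z‖ = ρ) (n : ℕ)
    (hn : 0 < n) : z ^ n - 1 ≠ 0 := by
  intro h
  rw [sub_eq_zero] at h
  have : ‖z ^ n‖ = 1 := by rw [h, norm_one]
  rw [norm_pow, hz] at this
  rcases lt_or_gt_of_ne (hρ1 : ρ ≠ 1) with h1 | h1
  · have := pow_lt_one₀ hρ0.le h1 hn.ne'
    linarith
  · have := one_lt_pow₀ h1 hn.ne'
    linarith

lemma key (r : ℝ) (hr : 1 < r) (u : ℂ → ℂ)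
    (hu : AnalyticOnNhd ℂ u {z : ℂ | r⁻¹ ≤ ‖z‖ ∧ ‖z‖ ≤ r}) (n : ℕ) (hn : 1 ≤ n) :
    trap n u - circInt u
      = circleIntDivIz r (fun z => u z / (z ^ n - 1))
        + circleIntDivIz r⁻¹ (fun z => u z / (z ^ (-(n:ℤ)) - 1)) := by
  have hr0 : (0:ℝ) < r := lt_trans one_pos hr
  have hrinv : (0:ℝ) < r⁻¹ := inv_pos.mpr hr0
  have hrinv1 : r⁻¹ < 1 := inv_lt_one_of_one_lt₀ hr
  have hn0 : 0 < n := hn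
  have hnc : (n:ℂ) ≠ 0 := Nat.cast_ne_zero.mpr hn0.ne'
  have huA : ∀ z : ℂ, r⁻¹ ≤ ‖z‖ → ‖z‖ ≤ r → AnalyticAt ℂ u z := fun z h1 h2 => hu z ⟨h1, h2⟩
  set ω : ℕ → ℂ := fun k => Complex.exp (2 * π * Complex.I * ((k : ℂ) + 1) / n) with hω
  have hωnorm : ∀ k, ‖ω k‖ = 1 := fun k => root_norm n k hn0
  have hωne : ∀ k, ω k ≠ 0 := fun k => Complex.exp_ne_zero _
  -- the auxiliary integrals
  set J : ℝ → ℂ := fun ρ => ∮ z in C(0, ρ), u z / ((z ^ n - 1) * (Complex.I * z)) with hJ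
  set g : ℕ → ℂ → ℂ := fun k z => ω k * u z / ((n : ℂ) * (Complex.I * z)) with hg
  -- continuity of u on the annulus
  have hucont : ∀ z : ℂ, r⁻¹ ≤ ‖z‖ → ‖z‖ ≤ r → ContinuousAt u z :=
    fun z h1 h2 => (huA z h1 h2).continuousAt
  -- Step A: split J ρ into partial fractions
  have splitJ : ∀ ρ : ℝ, 0 < ρ → ρ ≠ 1 → r⁻¹ ≤ ρ → ρ ≤ r →
      J ρ = ∑ k ∈ Finset.range n, ∮ z in C(0, ρ), g k z / (z - ω k) := by
    intro ρ hρ hρ1 hρa hρb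
    have hzfacts : ∀ z ∈ Metric.sphere (0:ℂ) ρ,
        z ≠ 0 ∧ z ^ n - 1 ≠ 0 := by
      intro z hz
      rw [mem_sphere_zero_iff_norm] at hz
      refine ⟨fun h => by rw [h, norm_zero] at hz; exact hρ.ne hz, ?_⟩
      exact pow_ne_one_of_norm hρ hρ1 hz n hn0
    have heq : Set.EqOn (fun z : ℂ => u z / ((z ^ n - 1) * (Complex.I * z)))
        (fun z : ℂ => ∑ k ∈ Finset.range n, g k z / (z - ω k)) (Metric.sphere 0 ρ) := by
      intro z hz
      obtain ⟨hz0, hzn⟩ := hzfacts z hz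
      have hpf := partial_fractions' n hn0 z (fun h => hzn (by rw [h, sub_self]))
      have step1 : ∑ k ∈ Finset.range n, g k z / (z - ω k)
          = (∑ k ∈ Finset.range n, ω k / (z - ω k)) * (u z / ((n : ℂ) * (Complex.I * z))) := by
        rw [Finset.sum_mul]
        exact Finset.sum_congr rfl fun k _ => by rw [hg]; simp only; ring
      simp only
      rw [step1, hpf]
      field_simp
    rw [hJ]
    simp only
    rw [circleIntegral.integral_congr hρ.le heq]
    apply my_circleIntegral_sum
    intro k _
    apply ContinuousOn.circleIntegrable hρ.le
    apply ContinuousOn.div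
    · apply ContinuousOn.div
      · apply ContinuousOn.mul continuousOn_const
        intro z hz
        rw [mem_sphere_zero_iff_norm] at hz
        exact (hucont z (by rw [hz]; exact hρa) (by rw [hz]; exact hρb)).continuousWithinAt
      · fun_prop
      · intro z hz
        rw [mem_sphere_zero_iff_norm] at hz
        have hz0 : z ≠ 0 := fun h => by rw [h, norm_zero] at hz; exact hρ.ne hz
        simp [hnc, Complex.I_ne_zero, hz0]
    · fun_prop
    · intro z hz
      have : ‖z‖ = ρ := mem_sphere_zero_iff_norm.mp hz
      intro h
      rw [sub_eq_zero] at h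
      rw [h, hωnorm k] at this
      exact hρ1 this.symm
  -- Step A': each g k is analytic on the annulus
  have hganal : ∀ k, ∀ z : ℂ, r⁻¹ ≤ ‖z‖ → ‖z‖ ≤ r → AnalyticAt ℂ (g k) z := by
    intro k z h1 h2
    have hz0 : z ≠ 0 := by
      intro h; rw [h, norm_zero] at h1; linarith
    exact (analyticAt_const.mul (huA z h1 h2)).div
      (analyticAt_const.mul (analyticAt_const.mul (analyticAt_id)))
      (by simp [hnc, Complex.I_ne_zero, hz0])
  -- Step A'': residues
  have hres : J r - J r⁻¹ = trap n u := by
    rw [splitJ r hr0 (by linarith) (by nlinarith) le_rfl,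
      splitJ r⁻¹ hrinv (by linarith) le_rfl (by nlinarith), ← Finset.sum_sub_distrib]
    have : ∀ k ∈ Finset.range n,
        ((∮ z in C(0, r), g k z / (z - ω k)) - ∮ z in C(0, r⁻¹), g k z / (z - ω k))
          = ((2 * π / n : ℝ) : ℂ) * u (ω k) := by
      intro k _
      rw [annulus_pole hr (hωnorm k) (hganal k)]
      rw [hg]
      simp only
      have := hωne k
      push_cast
      field_simp
    rw [Finset.sum_congr rfl this, trap, ← Finset.mul_sum]
  -- Step B : circInt as circle integral over radius r⁻¹
  have hIz : ∀ z : ℂ, z ≠ 0 → Complex.I * z ≠ 0 := by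
    intro z hz
    simp [Complex.I_ne_zero, hz]
  have hB : circInt u = ∮ z in C(0, r⁻¹), (Complex.I * z)⁻¹ * u z := by
    have h1 : circInt u = circleIntDivIz 1 u := by
      unfold circInt circleIntDivIz
      apply intervalIntegral.integral_congr
      intro θ _
      simp
    rw [h1, circleIntDivIz_eq u one_pos]
    apply my_deform hrinv hrinv1.le
    intro z h1 h2
    have hz0 : z ≠ 0 := by intro h; rw [h, norm_zero] at h1; linarith
    exact (((differentiableAt_const _).mul differentiableAt_id).inv (hIz z hz0)).mul
      (huA z h1 (le_trans h2 hr.le)).differentiableAt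
  -- Step C1
  have hC1 : circleIntDivIz r (fun z => u z / (z ^ n - 1)) = J r := by
    rw [circleIntDivIz_eq _ hr0, hJ]
    apply circleIntegral.integral_congr hr0.le
    intro z hz
    rw [mem_sphere_zero_iff_norm] at hz
    have hz0 : z ≠ 0 := by intro h; rw [h, norm_zero] at hz; linarith
    have hzn : z ^ n - 1 ≠ 0 := pow_ne_one_of_norm hr0 (by linarith) hz n hn0
    simp only
    rw [inv_mul_eq_div, div_div]
  -- Step C2
  have hC2 : circleIntDivIz r⁻¹ (fun z => u z / (z ^ (-(n:ℤ)) - 1))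
      = -(J r⁻¹) - ∮ z in C(0, r⁻¹), (Complex.I * z)⁻¹ * u z := by
    rw [circleIntDivIz_eq _ hrinv, hJ]
    simp only
    have heq : Set.EqOn
        (fun z : ℂ => (Complex.I * z)⁻¹ * (u z / (z ^ (-(n:ℤ)) - 1)))
        (fun z : ℂ => -(u z / ((z ^ n - 1) * (Complex.I * z))) + -((Complex.I * z)⁻¹ * u z))
        (Metric.sphere 0 r⁻¹) := by
      intro z hz
      rw [mem_sphere_zero_iff_norm] at hz
      have hz0 : z ≠ 0 := by intro h; rw [h, norm_zero] at hz; linarith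
      have hzn : z ^ n - 1 ≠ 0 := pow_ne_one_of_norm hrinv (by linarith) hz n hn0
      have hzn0 : z ^ n ≠ 0 := pow_ne_zero _ hz0
      simp only [zpow_neg, zpow_natCast]
      have hinv : (z ^ n)⁻¹ - 1 ≠ 0 := by
        intro h
        rw [sub_eq_zero, inv_eq_one] at h
        exact hzn (by rw [h, sub_self])
      have hzn' : (1:ℂ) - z ^ n ≠ 0 := by
        intro h; apply hzn; linear_combination -h
      have hkey : ((z ^ n)⁻¹ - 1)⁻¹ = -(z ^ n - 1)⁻¹ - 1 := by
        field_simp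
        ring
      simp only [div_eq_mul_inv, mul_inv]
      rw [hkey]
      ring
    rw [circleIntegral.integral_congr hrinv.le heq]
    have hcont1 : ContinuousOn (fun z : ℂ => -(u z / ((z ^ n - 1) * (Complex.I * z))))
        (Metric.sphere 0 r⁻¹) := by
      apply ContinuousOn.neg
      apply ContinuousOn.div
      · intro z hz
        rw [mem_sphere_zero_iff_norm] at hz
        exact (hucont z (by rw [hz]) (by rw [hz]; nlinarith)).continuousWithinAt
      · fun_prop
      · intro z hz
        rw [mem_sphere_zero_iff_norm] at hz
        have hz0 : z ≠ 0 := by intro h; rw [h, norm_zero] at hz; linarith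
        exact mul_ne_zero (pow_ne_one_of_norm hrinv (by linarith) hz n hn0) (hIz z hz0)
    have hcont2 : ContinuousOn (fun z : ℂ => -((Complex.I * z)⁻¹ * u z))
        (Metric.sphere 0 r⁻¹) := by
      apply ContinuousOn.neg
      apply ContinuousOn.mul
      · apply ContinuousOn.inv₀ (by fun_prop)
        intro z hz
        rw [mem_sphere_zero_iff_norm] at hz
        have hz0 : z ≠ 0 := by intro h; rw [h, norm_zero] at hz; linarith
        exact hIz z hz0
      · intro z hz
        rw [mem_sphere_zero_iff_norm] at hz
        exact (hucont z (by rw [hz]) (by rw [hz]; nlinarith)).continuousWithinAt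
    rw [my_circleIntegral_add (hcont1.circleIntegrable hrinv.le) (hcont2.circleIntegrable hrinv.le),
      my_circleIntegral_neg, my_circleIntegral_neg]
    ring
  rw [hC1, hC2, ← hB, ← hres]
  ring

/-- the trapezoidal-rule error representation and the
exponential error bound `|T_n(u) − I(u)| ≤ C r^{−n}`. -/
theorem trapezoidal_error_representation_and_bound
    (r : ℝ) (hr : 1 < r) (u : ℂ → ℂ)
    (hu : AnalyticOnNhd ℂ u {z : ℂ | r⁻¹ ≤ ‖z‖ ∧ ‖z‖ ≤ r}) :
    (∀ n : ℕ, 1 ≤ n →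
      trap n u - circInt u
        = circleIntDivIz r (fun z => u z / (z ^ n - 1))
          + circleIntDivIz r⁻¹ (fun z => u z / (z ^ (-(n:ℤ)) - 1))) ∧
    (∃ C : ℝ, 0 ≤ C ∧ ∀ n : ℕ, 1 ≤ n →
      ‖trap n u - circInt u‖ ≤ C * (r⁻¹) ^ n) := by
  have hr0 : (0:ℝ) < r := lt_trans one_pos hr
  have hrinv : (0:ℝ) < r⁻¹ := inv_pos.mpr hr0
  have hrinv1 : r⁻¹ < 1 := inv_lt_one_of_one_lt₀ hr
  refine ⟨fun n hn => key r hr u hu n hn, ?_⟩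
  -- the sup bound
  set A : Set ℂ := {z : ℂ | r⁻¹ ≤ ‖z‖ ∧ ‖z‖ ≤ r} with hA
  have hAcompact : IsCompact A := by
    have : A = Metric.closedBall 0 r ∩ {z : ℂ | r⁻¹ ≤ ‖z‖} := by
      ext z
      simp only [hA, Set.mem_setOf_eq, Set.mem_inter_iff, Metric.mem_closedBall,
        Complex.dist_eq, sub_zero]
      tauto
    rw [this]
    exact (isCompact_closedBall 0 r).inter_right (isClosed_le continuous_const continuous_norm)
  have hucont : ContinuousOn u A := fun z hz => (hu z hz).continuousAt.continuousWithinAt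
  obtain ⟨M, hM⟩ := hAcompact.exists_bound_of_continuousOn hucont
  set M0 : ℝ := max M 0 with hM0
  have hM0nonneg : 0 ≤ M0 := le_max_right _ _
  have hM' : ∀ z ∈ A, ‖u z‖ ≤ M0 := fun z hz => le_trans (hM z hz) (le_max_left _ _)
  have h1r : (0:ℝ) < 1 - r⁻¹ := by linarith
  refine ⟨4 * π * (M0 / (1 - r⁻¹)), by positivity, ?_⟩
  intro n hn
  rw [key r hr u hu n hn]
  set B : ℝ := M0 / (1 - r⁻¹) * (r⁻¹) ^ n with hB
  have hBnonneg : 0 ≤ B := by positivity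
  have hrn1 : 1 < r ^ n := one_lt_pow₀ hr (by omega)
  have hrn_ineq : r ^ n * (1 - r⁻¹) ≤ r ^ n - 1 := by
    have hsucc : r ^ (n - 1) * r = r ^ n := by
      rw [← pow_succ]
      congr 1
      omega
    have hq : (1:ℝ) ≤ r ^ (n - 1) := one_le_pow₀ hr.le
    have : (1:ℝ) ≤ r ^ n * r⁻¹ := by
      rw [← hsucc, mul_assoc, mul_inv_cancel₀ hr0.ne', mul_one]
      exact hq
    nlinarith
  have hbound : ∀ z : ℂ, ‖z‖ = r ∨ ‖z‖ = r⁻¹ → ∀ w : ℂ, r ^ n - 1 ≤ ‖w‖ →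
      ‖u z / w‖ ≤ B := by
    intro z hz w hw
    have hzA : z ∈ A := by
      rcases hz with h | h
      · exact ⟨by rw [h]; nlinarith, h.le⟩
      · exact ⟨h.ge, by rw [h]; nlinarith⟩
    have hw0 : (0:ℝ) < r ^ n - 1 := by linarith
    rw [norm_div]
    have h1 : ‖u z‖ / ‖w‖ ≤ M0 / (r ^ n - 1) :=
      div_le_div₀ (by positivity) (hM' z hzA) hw0 hw
    have h2 : M0 / (r ^ n - 1) ≤ M0 / (r ^ n * (1 - r⁻¹)) :=
      div_le_div_of_nonneg_left hM0nonneg (by positivity) hrn_ineq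
    refine le_trans h1 (le_trans h2 (le_of_eq ?_))
    rw [hB, inv_pow]
    field_simp
  have hnormz : ∀ (ρ : ℝ) (t : ℝ), 0 ≤ ρ → ‖(ρ:ℂ) * Complex.exp (Complex.I * t)‖ = ρ := by
    intro ρ t hρ
    rw [norm_mul, mul_comm Complex.I (t:ℂ), Complex.norm_exp_ofReal_mul_I, Complex.norm_real, Real.norm_eq_abs, _root_.abs_of_nonneg hρ, mul_one]
  have houter : ‖circleIntDivIz r (fun z => u z / (z ^ n - 1))‖ ≤ B * (2 * π) := by
    unfold circleIntDivIz
    have := intervalIntegral.norm_integral_le_of_norm_le_const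
      (f := fun t : ℝ => u ((r:ℂ) * Complex.exp (Complex.I * t)) /
        (((r:ℂ) * Complex.exp (Complex.I * t)) ^ n - 1)) (a := 0) (b := 2*π) (C := B) ?_
    · calc _ ≤ B * |2*π - 0| := this
        _ = B * (2*π) := by rw [sub_zero, abs_of_pos (by positivity)]
    · intro t _
      set z := (r:ℂ) * Complex.exp (Complex.I * t) with hzdef
      have hz : ‖z‖ = r := hnormz r t hr0.le
      apply hbound z (Or.inl hz)
      have : ‖z ^ n‖ = r ^ n := by rw [norm_pow, hz]
      calc r ^ n - 1 = ‖z ^ n‖ - ‖(1:ℂ)‖ := by rw [this, norm_one]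
        _ ≤ ‖z ^ n - 1‖ := norm_sub_norm_le _ _
  have hinner : ‖circleIntDivIz r⁻¹ (fun z => u z / (z ^ (-(n:ℤ)) - 1))‖ ≤ B * (2 * π) := by
    unfold circleIntDivIz
    have := intervalIntegral.norm_integral_le_of_norm_le_const
      (f := fun t : ℝ => u (((r⁻¹:ℝ):ℂ) * Complex.exp (Complex.I * t)) /
        ((((r⁻¹:ℝ):ℂ) * Complex.exp (Complex.I * t)) ^ (-(n:ℤ)) - 1)) (a := 0) (b := 2*π)
        (C := B) ?_
    · calc _ ≤ B * |2*π - 0| := this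
        _ = B * (2*π) := by rw [sub_zero, abs_of_pos (by positivity)]
    · intro t _
      set z := ((r⁻¹:ℝ):ℂ) * Complex.exp (Complex.I * t) with hzdef
      have hz : ‖z‖ = r⁻¹ := hnormz r⁻¹ t hrinv.le
      have hz0 : z ≠ 0 := by
        intro h; rw [h, norm_zero] at hz; exact hrinv.ne' hz.symm
      apply hbound z (Or.inr hz)
      have : ‖z ^ (-(n:ℤ))‖ = r ^ n := by
        rw [zpow_neg, zpow_natCast, norm_inv, norm_pow, hz, ← inv_pow, inv_inv]
      calc r ^ n - 1 = ‖z ^ (-(n:ℤ))‖ - ‖(1:ℂ)‖ := by rw [this, norm_one]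
        _ ≤ ‖z ^ (-(n:ℤ)) - 1‖ := norm_sub_norm_le _ _
  calc ‖circleIntDivIz r (fun z => u z / (z ^ n - 1))
        + circleIntDivIz r⁻¹ (fun z => u z / (z ^ (-(n:ℤ)) - 1))‖
      ≤ ‖circleIntDivIz r (fun z => u z / (z ^ n - 1))‖
        + ‖circleIntDivIz r⁻¹ (fun z => u z / (z ^ (-(n:ℤ)) - 1))‖ := norm_add_le _ _
    _ ≤ B * (2*π) + B * (2*π) := add_le_add houter hinner
    _ = 4 * π * (M0 / (1 - r⁻¹)) * (r⁻¹) ^ n := by rw [hB]; ring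
end Aux
end

section
/- For odd p ≥ 3, the function w(t) = ((p−2)!!/(p−3)!!) ∫_0^t (t − τ)(sin τ)^{p−2} dτ satisfies w(t) = t − I_p(sin t), where I_p is the Taylor polynomial of arcsin truncated at degree p−2; moreover w: [0,2π] → [0,2π] is strictly increasing, w(0)=0, w(2π)=2π, and w(t) = O(t^p) as t → 0⁺ and w(t) = 2π + O((t−2π)^p) as t → 2π⁻. -/
open scoped Real
open Filter Topology Asymptotics intervalIntegral



lemma df_odd (j : ℕ) :
    (Nat.doubleFactorial (2*j+1) : ℝ) = (2*j+1) * (Nat.doubleFactorial (2*j-1) : ℝ) := by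
  cases j with
  | zero => simp [Nat.doubleFactorial]
  | succ j =>
    have h : 2*(j+1)+1 = (2*j+1)+2 := by ring
    have h2 : 2*(j+1)-1 = 2*j+1 := by omega
    rw [h, h2, Nat.doubleFactorial_add_two]
    push_cast; ring

lemma df_even (j : ℕ) :
    (Nat.doubleFactorial (2*j+2) : ℝ) = (2*j+2) * (Nat.doubleFactorial (2*j) : ℝ) := by
  rw [Nat.doubleFactorial_add_two]; push_cast; ring


/-- properties of the corner-smoothing substitution
`w(t) = ((p−2)!!/(p−3)!!) ∫₀ᵗ (t−τ)(sin τ)^{p−2} dτ` for odd `p ≥ 3`: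
it equals `t − I_p(sin t)` with `I_p` the truncated arcsin series, is strictly
increasing on `[0,2π]` with `w(0)=0`, `w(2π)=2π`, and vanishes to order `p` at
both endpoints. -/
theorem corner_substitution_properties
    (p : ℕ) (hp : 3 ≤ p) (hodd : Odd p)
    (w : ℝ → ℝ)
    (hw : ∀ t : ℝ, w t = ((Nat.doubleFactorial (p - 2) : ℝ) /
        (Nat.doubleFactorial (p - 3) : ℝ)) *
      ∫ τ in (0:ℝ)..t, (t - τ) * Real.sin τ ^ (p - 2)) :
    (∀ t : ℝ, w t = t - ∑ j ∈ Finset.range ((p - 1) / 2),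
        ((Nat.doubleFactorial (2 * j - 1) : ℝ) / (Nat.doubleFactorial (2 * j) : ℝ))
          * Real.sin t ^ (2 * j + 1) / (2 * j + 1)) ∧
    StrictMonoOn w (Set.Icc 0 (2 * π)) ∧
    w 0 = 0 ∧ w (2 * π) = 2 * π ∧
    w =O[𝓝[>] 0] (fun t : ℝ => t ^ p) ∧
    (fun t : ℝ => w t - 2 * π) =O[𝓝[<] (2 * π)] (fun t : ℝ => (t - 2 * π) ^ p) := by
  obtain ⟨m, hm⟩ := hodd
  have hm1 : 1 ≤ m := by omega
  obtain ⟨n, hn⟩ : ∃ n, n = p - 2 := ⟨_, rfl⟩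
  have hn' : n = 2*m - 1 := by omega
  have hnodd : Odd n := ⟨m - 1, by omega⟩
  obtain ⟨a, ha⟩ : ∃ a : ℕ → ℝ, a = fun j =>
    (Nat.doubleFactorial (2*j-1) : ℝ) / (Nat.doubleFactorial (2*j) : ℝ) := ⟨_, rfl⟩
  have hapos : ∀ j, 0 < a j := by
    intro j; rw [ha]
    exact div_pos (by exact_mod_cast Nat.doubleFactorial_pos _)
      (by exact_mod_cast Nat.doubleFactorial_pos _)
  have harec : ∀ j : ℕ, a (j+1) * (2*j+2) = a j * (2*j+1) := by
    intro j
    have h1 : 2*(j+1)-1 = 2*j+1 := by omega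
    have h2 : 2*(j+1) = 2*j+2 := by ring
    have hdne : (Nat.doubleFactorial (2*j) : ℝ) ≠ 0 := by
      exact_mod_cast (Nat.doubleFactorial_pos _).ne'
    have hdne2 : (Nat.doubleFactorial (2*j+2) : ℝ) ≠ 0 := by
      exact_mod_cast (Nat.doubleFactorial_pos _).ne'
    have h5 : 2*j+2-1 = 2*j+1 := by omega
    rw [ha]; simp only [h1, h2, h5]
    rw [div_mul_eq_mul_div, div_mul_eq_mul_div, df_odd j, df_even j]
    field_simp
  obtain ⟨c, hc⟩ : ∃ c : ℝ, c = (Nat.doubleFactorial (p-2) : ℝ) / (Nat.doubleFactorial (p-3) : ℝ) := ⟨_, rfl⟩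
  rw [← hc] at hw
  simp only [show p - 2 = n from hn.symm] at hw
  have hcpos : 0 < c := by
    rw [hc]
    exact div_pos (by exact_mod_cast Nat.doubleFactorial_pos _)
      (by exact_mod_cast Nat.doubleFactorial_pos _)
  have hcam : a m * (2*m) = c := by
    have h1 : p - 2 = 2*(m-1)+1 := by omega
    have h2 : p - 3 = 2*(m-1) := by omega
    have h3 : 2*m = 2*(m-1)+2 := by omega
    have h4 : 2*m-1 = 2*(m-1)+1 := by omega
    have hdne2 : (Nat.doubleFactorial (2*(m-1)+2) : ℝ) ≠ 0 := by
      exact_mod_cast (Nat.doubleFactorial_pos _).ne'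
    have hdne3 : (Nat.doubleFactorial (2*(m-1)) : ℝ) ≠ 0 := by
      exact_mod_cast (Nat.doubleFactorial_pos _).ne'
    have hm0 : (m:ℝ) ≠ 0 := by exact_mod_cast (by omega : m ≠ 0)
    rw [ha, hc]; simp only [h1, h2, h3, h4]
    rw [df_even (m-1)]
    have : ((2:ℝ)*(m-1:ℕ)+2) = 2*m := by push_cast [Nat.cast_sub hm1]; ring
    rw [this]
    field_simp
    ring
    rw [show 2 + (m - 1) * 2 - 1 = 1 + (m - 1) * 2 by omega]
  -- the functions
  obtain ⟨S, hS⟩ : ∃ S : ℝ → ℝ, S = fun t => ∑ j ∈ Finset.range m, a j * Real.sin t ^ (2*j) := ⟨_, rfl⟩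
  obtain ⟨H, hH⟩ : ∃ H : ℝ → ℝ, H = fun t => 1 - Real.cos t * S t := ⟨_, rfl⟩
  obtain ⟨G, hG⟩ : ∃ G : ℝ → ℝ, G = fun t =>
    t - ∑ j ∈ Finset.range m, a j * Real.sin t ^ (2*j+1) / (2*j+1) := ⟨_, rfl⟩
  -- derivative of H
  have hsinpow : ∀ (k : ℕ) (t : ℝ), HasDerivAt (fun t => Real.sin t ^ k)
      ((k : ℝ) * Real.sin t ^ (k-1) * Real.cos t) t :=
    fun k t => (Real.hasDerivAt_sin t).pow k
  have hHd : ∀ t : ℝ, HasDerivAt H (c * Real.sin t ^ n) t := by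
    intro t
    have hSd : HasDerivAt S (∑ j ∈ Finset.range m,
        a j * ((2*j : ℕ) * Real.sin t ^ (2*j-1) * Real.cos t)) t := by
      rw [hS]
      exact HasDerivAt.fun_sum fun j _ => (hsinpow (2*j) t).const_mul (a j)
    have hd : HasDerivAt H (-((-Real.sin t) * S t + Real.cos t *
        (∑ j ∈ Finset.range m, a j * ((2*j : ℕ) * Real.sin t ^ (2*j-1) * Real.cos t)))) t := by
      rw [hH]
      exact (((Real.hasDerivAt_cos t).mul hSd).const_sub 1)
    convert hd using 1
    set x := Real.sin t with hx
    set y := Real.cos t with hy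
    obtain ⟨F, hF⟩ : ∃ F : ℕ → ℝ, F = fun k => a k * (2*(k:ℝ)) * x ^ (2*k-1) := ⟨_, rfl⟩
    have key : ∀ j ∈ Finset.range m,
        x * (a j * x ^ (2*j)) - y * (a j * ((2*j : ℕ) * x ^ (2*j-1) * y))
          = F (j+1) - F j := by
      intro j _
      have hpyth : x^2 + y^2 = 1 := Real.sin_sq_add_cos_sq t
      cases j with
      | zero =>
        have h1 : a 1 * 2 = a 0 * 1 := by
          have := harec 0; push_cast at this; linarith
        simp only [hF]
        norm_num
        linear_combination -x * h1
      | succ j =>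
        have e2 : 2*(j+1)-1 = 2*j+1 := by omega
        have e4 : 2*(j+2)-1 = 2*j+3 := by omega
        have hr := harec (j+1)
        push_cast at hr
        simp only [hF, e2, e4]
        push_cast
        linear_combination (-(x^(2*j+3))) * hr - a (j+1) * (2*(j:ℝ)+2) * x^(2*j+1) * hpyth
    have hsum : ∑ j ∈ Finset.range m,
        (x * (a j * x ^ (2*j)) - y * (a j * ((2*j : ℕ) * x ^ (2*j-1) * y)))
          = F m - F 0 := by
      rw [Finset.sum_congr rfl key, Finset.sum_range_sub]
    have hF0 : F 0 = 0 := by simp [hF]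
    have hFm : F m = c * x ^ n := by
      simp only [hF]
      rw [hn', ← hcam]
    calc c * x ^ n = F m - F 0 := by rw [hF0, hFm]; ring
      _ = ∑ j ∈ Finset.range m,
        (x * (a j * x ^ (2*j)) - y * (a j * ((2*j : ℕ) * x ^ (2*j-1) * y))) := hsum.symm
      _ = -(-x * S t + y * (∑ j ∈ Finset.range m, a j * ((2*j : ℕ) * x ^ (2*j-1) * y))) := by
        have hst : S t = ∑ j ∈ Finset.range m, a j * x ^ (2*j) := by rw [hS]
        rw [hst, Finset.mul_sum, Finset.mul_sum, neg_add, ← Finset.sum_neg_distrib,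
          ← Finset.sum_neg_distrib, ← Finset.sum_add_distrib]
        exact Finset.sum_congr rfl fun j _ => by ring
  -- continuity and endpoint values of H
  have hcont : Continuous fun τ => c * Real.sin τ ^ n :=
    continuous_const.mul (Real.continuous_sin.pow n)
  have hHat : ∀ t : ℝ, Real.sin t = 0 → Real.cos t = 1 → H t = 0 := by
    intro t hs hcos
    rw [hH]
    have hst0 : S t = ∑ j ∈ Finset.range m, a j * Real.sin t ^ (2*j) := by rw [hS]
    have hst : S t = 1 := by
      rw [hst0]
      rw [Finset.sum_eq_single 0]
      · rw [ha]; simp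
      · intro j _ hj
        simp [hs, zero_pow (by omega : 2*j ≠ 0)]
      · intro h; exact absurd (Finset.mem_range.mpr (by omega)) h
    simp [hst, hcos]
  have hH0 : H 0 = 0 := hHat 0 Real.sin_zero Real.cos_zero
  have hH2 : H (2*π) = 0 := hHat (2*π) Real.sin_two_pi Real.cos_two_pi
  have hHint : ∀ t : ℝ, H t = ∫ τ in (0:ℝ)..t, c * Real.sin τ ^ n := by
    intro t
    have h := intervalIntegral.integral_eq_sub_of_hasDerivAt
      (fun x _ => hHd x) (hcont.intervalIntegrable 0 t)
    rw [hH0, sub_zero] at h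
    exact h.symm
  -- w as explicit function and its derivative
  have hA : ∀ t : ℝ, HasDerivAt (fun u => ∫ τ in (0:ℝ)..u, Real.sin τ ^ n)
      (Real.sin t ^ n) t :=
    fun t => ((Real.continuous_sin.pow n).integral_hasStrictDerivAt 0 t).hasDerivAt
  have hB : ∀ t : ℝ, HasDerivAt (fun u => ∫ τ in (0:ℝ)..u, τ * Real.sin τ ^ n)
      (t * Real.sin t ^ n) t :=
    fun t => ((continuous_id'.mul (Real.continuous_sin.pow n)).integral_hasStrictDerivAt 0 t).hasDerivAt
  have hwf : ∀ t : ℝ, w t = c * (t * (∫ τ in (0:ℝ)..t, Real.sin τ ^ n)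
      - ∫ τ in (0:ℝ)..t, τ * Real.sin τ ^ n) := by
    intro t
    rw [hw t]
    congr 1
    rw [← intervalIntegral.integral_const_mul, ← intervalIntegral.integral_sub (f := fun τ => t * Real.sin τ ^ n) (g := fun τ => τ * Real.sin τ ^ n)
        ((continuous_const.mul (Real.continuous_sin.pow n)).intervalIntegrable 0 t)
        ((continuous_id'.mul (Real.continuous_sin.pow n)).intervalIntegrable 0 t)]
    apply intervalIntegral.integral_congr
    intro τ _
    simp only
    ring
  have hwfun : w = fun t => c * (t * (∫ τ in (0:ℝ)..t, Real.sin τ ^ n)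
      - ∫ τ in (0:ℝ)..t, τ * Real.sin τ ^ n) := funext hwf
  have hwd : ∀ t : ℝ, HasDerivAt w (H t) t := by
    intro t
    rw [hwfun]
    have h1 : HasDerivAt (fun u : ℝ => u * (∫ τ in (0:ℝ)..u, Real.sin τ ^ n))
        (1 * (∫ τ in (0:ℝ)..t, Real.sin τ ^ n) + t * Real.sin t ^ n) t :=
      (hasDerivAt_id t).mul (hA t)
    have h2 := (h1.sub (hB t)).const_mul c
    refine h2.congr_deriv ?_
    rw [hHint t, intervalIntegral.integral_const_mul]
    ring
  -- w = G
  have hG0 : G 0 = 0 := by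
    rw [hG]
    simp only [Real.sin_zero]
    rw [Finset.sum_eq_zero, sub_zero]
    intro j _
    rw [zero_pow (by omega : 2*j+1 ≠ 0)]
    simp
  have hGd : ∀ t : ℝ, HasDerivAt G (H t) t := by
    intro t
    have hterm : ∀ j ∈ Finset.range m,
        HasDerivAt (fun t => a j * Real.sin t ^ (2*j+1) / (2*(j:ℝ)+1))
          (Real.cos t * (a j * Real.sin t ^ (2*j))) t := by
      intro j _
      have h := ((hsinpow (2*j+1) t).const_mul (a j)).div_const (2*(j:ℝ)+1)
      refine h.congr_deriv ?_
      have e : 2*j+1-1 = 2*j := by omega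
      rw [e]
      push_cast
      have hne : (2*(j:ℝ)+1) ≠ 0 := by positivity
      field_simp
    have hsum := HasDerivAt.fun_sum hterm
    have hid := (hasDerivAt_id t).sub hsum
    rw [hG]
    refine hid.congr_deriv ?_
    have hst : S t = ∑ j ∈ Finset.range m, a j * Real.sin t ^ (2*j) := by rw [hS]
    have hHt : H t = 1 - Real.cos t * S t := by rw [hH]
    rw [hHt, hst, Finset.mul_sum]
  have hHcont : Continuous H :=
    continuous_iff_continuousAt.mpr fun t => (hHd t).continuousAt
  have hw0 : w 0 = 0 := by rw [hw]; simp
  have hwG : ∀ t : ℝ, w t = G t := by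
    intro t
    have h1 := intervalIntegral.integral_eq_sub_of_hasDerivAt
      (fun x (_ : x ∈ Set.uIcc 0 t) => hwd x) (hHcont.intervalIntegrable 0 t)
    have h2 := intervalIntegral.integral_eq_sub_of_hasDerivAt
      (fun x (_ : x ∈ Set.uIcc 0 t) => hGd x) (hHcont.intervalIntegrable 0 t)
    rw [hw0, sub_zero] at h1
    rw [hG0, sub_zero] at h2
    rw [← h1, ← h2]
  -- positivity of H on the open interval
  have hHpos : ∀ t ∈ Set.Ioo (0:ℝ) (2*π), 0 < H t := by
    intro t ht
    obtain ⟨ht0, ht2⟩ := ht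
    rcases le_or_gt t π with htp | htp
    · rw [hHint t]
      apply intervalIntegral.intervalIntegral_pos_of_pos_on
        (hcont.intervalIntegrable 0 t) _ ht0
      intro x hx
      have hs : 0 < Real.sin x :=
        Real.sin_pos_of_pos_of_lt_pi hx.1 (lt_of_lt_of_le hx.2 htp)
      positivity
    · have hfund := intervalIntegral.integral_eq_sub_of_hasDerivAt
        (fun x (_ : x ∈ Set.uIcc t (2*π)) => hHd x) (hcont.intervalIntegrable t (2*π))
      rw [hH2] at hfund
      have hrepr : H t = ∫ τ in t..(2*π), -(c * Real.sin τ ^ n) := by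
        rw [intervalIntegral.integral_neg, hfund]
        ring
      rw [hrepr]
      apply intervalIntegral.intervalIntegral_pos_of_pos_on
        (hcont.neg.intervalIntegrable t (2*π)) _ ht2
      intro x hx
      have hsx : Real.sin x < 0 := by
        have h1 : 0 < x - π := by linarith [hx.1]
        have h2 : x - π < π := by linarith [hx.2]
        have h3 := Real.sin_pos_of_pos_of_lt_pi h1 h2
        rw [Real.sin_sub_pi] at h3
        linarith
      have hpow : Real.sin x ^ n < 0 := Odd.pow_neg hnodd hsx
      show 0 < -(c * Real.sin x ^ n)
      nlinarith
  -- strict monotonicity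
  have hmono : StrictMonoOn w (Set.Icc 0 (2*π)) := by
    apply strictMonoOn_of_deriv_pos (convex_Icc 0 (2*π))
    · exact fun t _ => (hwd t).continuousAt.continuousWithinAt
    · intro t ht
      rw [interior_Icc] at ht
      rw [(hwd t).deriv]
      exact hHpos t ht
  -- global bound |w t| ≤ c * |t|^p
  have hbound : ∀ t : ℝ, |w t| ≤ c * |t| ^ p := by
    intro t
    rw [hw t, abs_mul, abs_of_pos hcpos]
    have hle : ∀ x ∈ Set.uIoc (0:ℝ) t, ‖(t - x) * Real.sin x ^ n‖ ≤ |t| ^ (p-1) := by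
      intro x hx
      have hb : |x| ≤ |t| ∧ |t - x| ≤ |t| := by
        rcases Set.mem_uIoc.mp hx with ⟨h1, h2⟩ | ⟨h1, h2⟩
        · constructor <;> rw [abs_of_nonneg (by linarith), abs_of_pos (by linarith : (0:ℝ) < t)] <;> linarith
        · constructor
          · rw [abs_of_nonpos h2, abs_of_neg (by linarith : t < 0)]; linarith
          · rw [abs_of_nonpos (by linarith), abs_of_neg (by linarith : t < 0)]; linarith
      rw [norm_mul, norm_pow, Real.norm_eq_abs, Real.norm_eq_abs]
      have h1 : |Real.sin x| ^ n ≤ |t| ^ n := by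
        apply pow_le_pow_left₀ (abs_nonneg _)
        exact le_trans (Real.abs_sin_le_abs) hb.1
      have h2 : |t - x| * |Real.sin x| ^ n ≤ |t| * |t| ^ n := by
        apply mul_le_mul hb.2 h1 (by positivity) (abs_nonneg _)
      calc |t - x| * |Real.sin x| ^ n ≤ |t| * |t| ^ n := h2
        _ = |t| ^ (p-1) := by rw [← pow_succ']; congr 1; omega
    have hI := intervalIntegral.norm_integral_le_of_norm_le_const hle
    rw [sub_zero, Real.norm_eq_abs] at hI
    calc c * |∫ τ in (0:ℝ)..t, (t - τ) * Real.sin τ ^ n| ≤ c * (|t| ^ (p-1) * |t|) := by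
          apply mul_le_mul_of_nonneg_left hI hcpos.le
      _ = c * |t| ^ p := by rw [← pow_succ]; congr 2; omega
  have hpm : (p-1)/2 = m := by omega
  have hwid : ∀ t : ℝ, w t = t - ∑ j ∈ Finset.range ((p - 1) / 2),
      ((Nat.doubleFactorial (2 * j - 1) : ℝ) / (Nat.doubleFactorial (2 * j) : ℝ))
        * Real.sin t ^ (2 * j + 1) / (2 * j + 1) := by
    intro t
    rw [hwG t, hG, hpm]
    simp only [ha]
  have hw2 : w (2*π) = 2*π := by
    rw [hwG, hG]
    beta_reduce
    rw [Finset.sum_eq_zero, sub_zero]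
    intro j _
    rw [Real.sin_two_pi, zero_pow (by omega : 2*j+1 ≠ 0)]
    simp
  have hshift : ∀ t : ℝ, w t - 2*π = w (t - 2*π) := by
    intro t
    rw [hwG t, hwG (t - 2*π), hG]
    simp only [Real.sin_sub_two_pi]
    ring
  refine ⟨hwid, hmono, hw0, hw2, ?_, ?_⟩
  · apply Asymptotics.IsBigO.of_bound c
    apply Filter.Eventually.of_forall
    intro t
    rw [Real.norm_eq_abs, Real.norm_eq_abs, abs_pow]
    exact hbound t
  · apply Asymptotics.IsBigO.of_bound c
    apply Filter.Eventually.of_forall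
    intro t
    rw [Real.norm_eq_abs, Real.norm_eq_abs, abs_pow, hshift t]
    exact hbound _
end

section
/- Let g: ℂ → ℂ be 2π-periodic, analytic and injective on the strip {t : |Im t| < log r}, mapping [0,2π) onto a simple closed curve Γ. If x ∈ g({|Im t| < log r}) then the equation x = g(t_0) has exactly one solution t_0 in the strip modulo 2π, and for this t_0 the complexified squared distance (x_1 − g_1(t))² + (x_2 − g_2(t))² (with x = x_1 + i x_2, g = g_1 + i g_2 real-analytic on ℝ) vanishes at t = t_0; moreover the ratio |x − g(t)|² / (4 sin((t − t_0)/2) sin((t − \overline{t_0})/2)) extends to a nonvanishing analytic function of t in a neighborhood of ℝ when t_0 is a simple zero. -/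
open scoped Real
open Complex

open Filter Set Topology


lemma analyticAt_dslope_s19 {f : ℂ → ℂ} {a : ℂ} (hf : AnalyticAt ℂ f a) :
    AnalyticAt ℂ (dslope f a) a := by
  obtain ⟨p, hp⟩ := hf
  exact ⟨p.fslope, hp.has_fpower_series_dslope_fslope⟩

lemma hasDerivAt_conj_conj {u : ℂ → ℂ} {c a : ℂ}
    (h : HasDerivAt u c ((starRingEnd ℂ) a)) :
    HasDerivAt (fun t => (starRingEnd ℂ) (u ((starRingEnd ℂ) t))) ((starRingEnd ℂ) c) a := by
  rw [hasDerivAt_iff_tendsto_slope] at h ⊢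
  have h1 : Tendsto (fun t : ℂ => (starRingEnd ℂ) t) (𝓝[≠] a) (𝓝[≠] ((starRingEnd ℂ) a)) := by
    rw [tendsto_nhdsWithin_iff]
    constructor
    · exact (continuous_conj.tendsto a).mono_left nhdsWithin_le_nhds
    · filter_upwards [self_mem_nhdsWithin] with t ht
      exact fun hc => ht ((starRingEnd ℂ).injective hc)
  have h2 := (continuous_conj.tendsto c).comp (h.comp h1)
  refine h2.congr fun t => ?_
  simp only [Function.comp_apply, slope_def_field, ← map_sub, map_div₀, Complex.conj_conj]

lemma quotient_factor {T : Set ℂ} (hT : IsOpen T) {φ ψ : ℂ → ℂ}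
    (hφ : AnalyticOnNhd ℂ φ T) (hψ : AnalyticOnNhd ℂ ψ T)
    (hz : ∀ t ∈ T, ψ t = 0 → φ t = 0 ∧ deriv φ t ≠ 0 ∧ deriv ψ t ≠ 0)
    (hz' : ∀ t ∈ T, φ t = 0 → ψ t = 0) :
    ∃ h : ℂ → ℂ, AnalyticOnNhd ℂ h T ∧ (∀ t ∈ T, h t ≠ 0) ∧
      ∀ t ∈ T, φ t = h t * ψ t := by
  classical
  set h : ℂ → ℂ := fun t => if ψ t = 0 then deriv φ t / deriv ψ t else φ t / ψ t with hh
  have key : ∀ a ∈ T, ψ a = 0 → h =ᶠ[𝓝 a] fun t => dslope φ a t / dslope ψ a t := by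
    intro a ha ha0
    obtain ⟨hφ0, hφ', hψ'⟩ := hz a ha ha0
    have hΨa : dslope ψ a a ≠ 0 := by rwa [dslope_same]
    have hΨcont : ContinuousAt (dslope ψ a) a := (analyticAt_dslope_s19 (hψ a ha)).continuousAt
    have hev : ∀ᶠ t in 𝓝 a, dslope ψ a t ≠ 0 := hΨcont.eventually_ne hΨa
    have hE : ∀ᶠ t in 𝓝[≠] a ⊔ pure a, h t = dslope φ a t / dslope ψ a t := by
      rw [Filter.eventually_sup]
      constructor
      · filter_upwards [hev.filter_mono nhdsWithin_le_nhds, self_mem_nhdsWithin] with t hΨt ht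
        have hta : t - a ≠ 0 := sub_ne_zero.mpr ht
        have hψt : ψ t = (t - a) * dslope ψ a t := by
          have := sub_smul_dslope ψ a t; rw [ha0, sub_zero] at this
          rw [← this]; rfl
        have hφt : φ t = (t - a) * dslope φ a t := by
          have := sub_smul_dslope φ a t; rw [hφ0, sub_zero] at this
          rw [← this]; rfl
        have hψne : ψ t ≠ 0 := by rw [hψt]; exact mul_ne_zero hta hΨt
        simp only [hh, if_neg hψne]
        rw [hφt, hψt, mul_div_mul_left _ _ hta]
      · rw [Filter.eventually_pure]
        simp only [hh, if_pos ha0, dslope_same]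
    rwa [nhdsNE_sup_pure] at hE
  refine ⟨h, ?_, ?_, ?_⟩
  · intro a ha
    by_cases ha0 : ψ a = 0
    · have hA : AnalyticAt ℂ (fun t => dslope φ a t / dslope ψ a t) a := by
        refine (analyticAt_dslope_s19 (hφ a ha)).div (analyticAt_dslope_s19 (hψ a ha)) ?_
        rw [dslope_same]; exact (hz a ha ha0).2.2
      exact hA.congr (key a ha ha0).symm
    · have hev : ∀ᶠ t in 𝓝 a, ψ t ≠ 0 := (hψ a ha).continuousAt.eventually_ne ha0
      have hA : AnalyticAt ℂ (fun t => φ t / ψ t) a := (hφ a ha).div (hψ a ha) ha0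
      refine hA.congr ?_
      filter_upwards [hev] with t ht
      simp only [hh, if_neg ht]
  · intro a ha
    by_cases ha0 : ψ a = 0
    · obtain ⟨hφ0, hφ', hψ'⟩ := hz a ha ha0
      simp only [hh, if_pos ha0]
      exact div_ne_zero hφ' hψ'
    · have hφne : φ a ≠ 0 := fun hc => ha0 (hz' a ha hc)
      simp only [hh, if_neg ha0]
      exact div_ne_zero hφne ha0
  · intro a ha
    by_cases ha0 : ψ a = 0
    · rw [ha0, mul_zero]; exact (hz a ha ha0).1
    · simp only [hh, if_neg ha0, div_mul_cancel₀ _ ha0]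

/-- let `g` be `2π`-periodic, analytic and injective modulo
periods on the strip `|Im t| < log r`, with real-analytic components
`g₁, g₂` (analytic continuations of `Re g`, `Im g` from ℝ). If `x = g(t₀)` for
`t₀` in the strip, then `t₀` is the unique preimage modulo `2π`, the
complexified squared distance vanishes at `t₀`, and when `t₀` is a simple zero
(`g'(t₀) ≠ 0`) the ratio
`|x−g(t)|² / (4 sin((t−t₀)/2) sin((t−conj t₀)/2))` extends to a nonvanishing
analytic function in a neighborhood of ℝ. -/
theorem preimage_and_singularity_swap
    (r : ℝ) (hr : 1 < r) (S : Set ℂ)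
    (hS : S = {t : ℂ | |t.im| < Real.log r})
    (g g₁ g₂ : ℂ → ℂ)
    (hper : ∀ t : ℂ, g (t + 2 * π) = g t)
    (hg : AnalyticOnNhd ℂ g S)
    (hg₁ : AnalyticOnNhd ℂ g₁ S) (hg₂ : AnalyticOnNhd ℂ g₂ S)
    (hre : ∀ t : ℝ, g₁ t = ((g t).re : ℂ)) (him : ∀ t : ℝ, g₂ t = ((g t).im : ℂ))
    (hsplit : ∀ t ∈ S, g t = g₁ t + Complex.I * g₂ t)
    (hinj : ∀ s ∈ S, ∀ t ∈ S, g s = g t → ∃ m : ℤ, s = t + 2 * π * m)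
    (x t₀ : ℂ) (ht₀ : t₀ ∈ S) (hx : g t₀ = x) :
    (∀ t₁ ∈ S, g t₁ = x → ∃ m : ℤ, t₁ = t₀ + 2 * π * m) ∧
    ((x.re : ℂ) - g₁ t₀) ^ 2 + ((x.im : ℂ) - g₂ t₀) ^ 2 = 0 ∧
    (deriv g t₀ ≠ 0 →
      ∃ (h : ℂ → ℂ) (ε : ℝ), 0 < ε ∧
        AnalyticOnNhd ℂ h {t : ℂ | |t.im| < ε} ∧
        (∀ t : ℂ, |t.im| < ε → h t ≠ 0) ∧
        ∀ t : ℝ,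
          ((x.re : ℂ) - g₁ t) ^ 2 + ((x.im : ℂ) - g₂ t) ^ 2
            = h t * (4 * Complex.sin (((t : ℂ) - t₀) / 2)
                * Complex.sin (((t : ℂ) - (starRingEnd ℂ) t₀) / 2))) := by
  have hlr : 0 < Real.log r := Real.log_pos hr
  -- basic facts about S
  have hSopen : IsOpen S := by
    rw [hS]
    exact isOpen_lt (Complex.continuous_im.abs) continuous_const
  have hSconv : Convex ℝ S := by
    rw [hS]
    intro p hp q hq a b ha hb hab
    simp only [Set.mem_setOf_eq] at *
    have him' : (a • p + b • q).im = a * p.im + b * q.im := by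
      simp [Complex.add_im, Complex.smul_im]
    rw [him']
    calc |a * p.im + b * q.im| ≤ |a * p.im| + |b * q.im| := abs_add_le _ _
      _ = a * |p.im| + b * |q.im| := by
          rw [abs_mul, abs_mul, _root_.abs_of_nonneg ha, _root_.abs_of_nonneg hb]
      _ < a * Real.log r + b * Real.log r := by
          rcases eq_or_lt_of_le ha with ha0 | ha0
          · rcases eq_or_lt_of_le hb with hb0 | hb0
            · exfalso; rw [← ha0, ← hb0] at hab; simp at hab
            · rw [← ha0]; simpa using mul_lt_mul_of_pos_left hq hb0
          · rcases eq_or_lt_of_le hb with hb0 | hb0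
            · rw [← hb0]; simpa using mul_lt_mul_of_pos_left hp ha0
            · exact add_lt_add (mul_lt_mul_of_pos_left hp ha0)
                (mul_lt_mul_of_pos_left hq hb0)
      _ = Real.log r := by rw [← add_mul, hab, one_mul]
  have hSconn : IsPreconnected S := hSconv.isPreconnected
  have hmemS : ∀ t : ℝ, (t : ℂ) ∈ S := by
    intro t; rw [hS]; simp [hlr]
  have hconjS : ∀ {t : ℂ}, t ∈ S → (starRingEnd ℂ) t ∈ S := by
    intro t ht; rw [hS] at ht ⊢; simpa using ht
  have htransS : ∀ (c : ℂ) (k : ℤ), c ∈ S → c + 2 * π * k ∈ S := by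
    intro c k hc; rw [hS] at hc ⊢
    simpa using hc
  -- periodicity
  have hp : Function.Periodic g (2 * (π : ℂ)) := fun t => hper t
  have hgper : ∀ (t : ℂ) (m : ℤ), g (t + 2 * π * m) = g t := by
    intro t m
    have := (hp.int_mul m) t
    convert this using 2
    push_cast; ring
  have hgderiv_per : ∀ (t : ℂ) (m : ℤ), deriv g (t + 2 * π * m) = deriv g t := by
    intro t m
    have hfun : (fun s : ℂ => g (s + 2 * π * m)) = g := funext fun s => hgper s m
    rw [← deriv_comp_add_const g (2 * π * m) t, hfun]
  -- sine zeros
  have hsinzero : ∀ (c t : ℂ), Complex.sin ((t - c) / 2) = 0 ↔ ∃ k : ℤ, t = c + 2 * π * k := by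
    intro c t
    rw [Complex.sin_eq_zero_iff]
    constructor
    · rintro ⟨k, hk⟩; exact ⟨k, by linear_combination 2 * hk⟩
    · rintro ⟨k, hk⟩; exact ⟨k, by linear_combination hk / 2⟩
  have hcosnz : ∀ z : ℂ, Complex.sin z = 0 → Complex.cos z ≠ 0 := by
    intro z hz hc
    have := Complex.sin_sq_add_cos_sq z
    rw [hz, hc] at this; simp at this
  have hψderiv : ∀ (c t : ℂ),
      HasDerivAt (fun s : ℂ => 2 * Complex.sin ((s - c) / 2)) (Complex.cos ((t - c) / 2)) t := by
    intro c t
    have hinner : HasDerivAt (fun s : ℂ => (s - c) / 2) (1 / 2) t :=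
      ((hasDerivAt_id t).sub_const c).div_const 2
    have := ((Complex.hasDerivAt_sin ((t - c) / 2)).comp t hinner).const_mul (2 : ℂ)
    exact this.congr_deriv (by ring)
  have hψan : ∀ c : ℂ, AnalyticOnNhd ℂ (fun s : ℂ => 2 * Complex.sin ((s - c) / 2)) S := by
    intro c
    have : Differentiable ℂ (fun s : ℂ => 2 * Complex.sin ((s - c) / 2)) :=
      fun t => ((hψderiv c t).differentiableAt)
    exact this.differentiableOn.analyticOnNhd hSopen
  -- the reflected function
  set Gh : ℂ → ℂ := fun t => g₁ t - Complex.I * g₂ t with hGh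
  set f₂ : ℂ → ℂ := fun t => (starRingEnd ℂ) (g ((starRingEnd ℂ) t)) with hf₂
  have hGh_an : AnalyticOnNhd ℂ Gh S := hg₁.sub (analyticOnNhd_const.mul hg₂)
  have hf₂deriv : ∀ a ∈ S, HasDerivAt f₂ ((starRingEnd ℂ) (deriv g ((starRingEnd ℂ) a))) a := by
    intro a ha
    exact hasDerivAt_conj_conj ((hg _ (hconjS ha)).differentiableAt.hasDerivAt)
  have hf₂diff : DifferentiableOn ℂ f₂ S :=
    fun a ha => (hf₂deriv a ha).differentiableAt.differentiableWithinAt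
  have hf₂an : AnalyticOnNhd ℂ f₂ S := hf₂diff.analyticOnNhd hSopen
  have hrealeq : ∀ t : ℝ, Gh t = f₂ t := by
    intro t
    simp only [hGh, hf₂, hre t, him t, Complex.conj_ofReal]
    apply Complex.ext <;> simp
  have h0S : (0 : ℂ) ∈ S := by simpa using hmemS 0
  have freq : ∃ᶠ z in 𝓝[≠] (0 : ℂ), Gh z = f₂ z := by
    have htd : Filter.Tendsto (fun t : ℝ => (t : ℂ)) (𝓝[≠] (0 : ℝ)) (𝓝[≠] (0 : ℂ)) := by
      rw [tendsto_nhdsWithin_iff]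
      constructor
      · have := (Complex.continuous_ofReal.tendsto 0).mono_left
          (nhdsWithin_le_nhds (s := {(0:ℝ)}ᶜ))
        simpa using this
      · filter_upwards [self_mem_nhdsWithin] with t ht
        simp only [Set.mem_compl_iff, Set.mem_singleton_iff] at ht ⊢
        exact fun hc => ht (by exact_mod_cast hc)
    exact htd.frequently ((Filter.Eventually.of_forall hrealeq).frequently)
  have hEq : Set.EqOn Gh f₂ S :=
    hGh_an.eqOn_of_preconnected_of_frequently_eq hf₂an hSconn h0S freq
  have hGh_deriv : ∀ a ∈ S, deriv Gh a = (starRingEnd ℂ) (deriv g ((starRingEnd ℂ) a)) := by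
    intro a ha
    have hev : Gh =ᶠ[𝓝 a] f₂ := hEq.eventuallyEq_of_mem (hSopen.mem_nhds ha)
    rw [hev.deriv_eq, (hf₂deriv a ha).deriv]
  -- conjunct 1
  have conj1 : ∀ t₁ ∈ S, g t₁ = x → ∃ m : ℤ, t₁ = t₀ + 2 * π * m := by
    intro t₁ ht₁ hgt₁
    exact hinj t₁ ht₁ t₀ ht₀ (by rw [hgt₁, hx])
  refine ⟨conj1, ?_, ?_⟩
  · -- conjunct 2
    have e4 : x = (x.re : ℂ) + (x.im : ℂ) * Complex.I := (Complex.re_add_im x).symm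
    have c0 : ((x.re : ℂ) - g₁ t₀) + Complex.I * ((x.im : ℂ) - g₂ t₀) = 0 := by
      linear_combination hsplit t₀ ht₀ - hx - e4
    linear_combination (((x.re : ℂ) - g₁ t₀) - Complex.I * ((x.im : ℂ) - g₂ t₀)) * c0
      + ((x.im : ℂ) - g₂ t₀) ^ 2 * Complex.I_sq
  · -- conjunct 3
    intro hd0
    -- first factor
    obtain ⟨h₁, hh₁an, hh₁ne, hh₁fac⟩ :=
      quotient_factor (φ := fun s => x - g s) (ψ := fun s => 2 * Complex.sin ((s - t₀) / 2))
        hSopen (analyticOnNhd_const.sub hg) (hψan t₀)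
        (by
          intro t ht hψ0
          have hsin : Complex.sin ((t - t₀) / 2) = 0 := by simpa using hψ0
          obtain ⟨k, hk⟩ := (hsinzero t₀ t).mp hsin
          subst hk
          refine ⟨by show x - g _ = 0; rw [hgper, hx, sub_self], ?_, ?_⟩
          · have : deriv (fun s : ℂ => x - g s) (t₀ + 2 * π * k) = -deriv g (t₀ + 2 * π * k) :=
              (((hg _ ht).differentiableAt.hasDerivAt).const_sub x).deriv
            rw [this, hgderiv_per]
            simpa using hd0
          · rw [(hψderiv t₀ _).deriv]
            exact hcosnz _ hsin)
        (by
          intro t ht hφ0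
          have hgt : g t = x := (sub_eq_zero.mp hφ0).symm
          obtain ⟨m, hm⟩ := conj1 t ht hgt
          have hs0 : Complex.sin ((t - t₀) / 2) = 0 := (hsinzero t₀ t).mpr ⟨m, hm⟩
          show 2 * Complex.sin ((t - t₀) / 2) = 0
          rw [hs0, mul_zero])
    -- second factor
    obtain ⟨h₂, hh₂an, hh₂ne, hh₂fac⟩ :=
      quotient_factor (φ := fun s => (starRingEnd ℂ) x - Gh s)
        (ψ := fun s => 2 * Complex.sin ((s - (starRingEnd ℂ) t₀) / 2))
        hSopen (analyticOnNhd_const.sub hGh_an) (hψan _)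
        (by
          intro t ht hψ0
          have hsin : Complex.sin ((t - (starRingEnd ℂ) t₀) / 2) = 0 := by simpa using hψ0
          obtain ⟨k, hk⟩ := (hsinzero _ t).mp hsin
          have hct : (starRingEnd ℂ) t = t₀ + 2 * π * k := by
            rw [hk]
            simp [map_add, map_mul, Complex.conj_ofReal, map_ofNat, map_intCast]
          refine ⟨?_, ?_, ?_⟩
          · show (starRingEnd ℂ) x - Gh t = 0
            rw [sub_eq_zero, hEq ht]
            show (starRingEnd ℂ) x = (starRingEnd ℂ) (g ((starRingEnd ℂ) t))
            rw [hct, hgper, hx]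
          · have : deriv (fun s : ℂ => (starRingEnd ℂ) x - Gh s) t = -deriv Gh t :=
              ((hGh_an t ht).differentiableAt.hasDerivAt.const_sub _).deriv
            rw [this, hGh_deriv t ht, hct, hgderiv_per]
            simp only [ne_eq, neg_eq_zero, map_eq_zero]
            exact hd0
          · rw [(hψderiv _ _).deriv]
            exact hcosnz _ hsin)
        (by
          intro t ht hφ0
          have hgconj : g ((starRingEnd ℂ) t) = x := by
            have h1 : (starRingEnd ℂ) x = Gh t := sub_eq_zero.mp hφ0
            rw [hEq ht] at h1
            have h2 : (starRingEnd ℂ) x = (starRingEnd ℂ) (g ((starRingEnd ℂ) t)) := h1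
            have := congrArg (starRingEnd ℂ) h2
            simpa using this.symm
          obtain ⟨m, hm⟩ := conj1 _ (hconjS ht) hgconj
          have htm : t = (starRingEnd ℂ) t₀ + 2 * π * m := by
            have := congrArg (starRingEnd ℂ) hm
            simpa [map_add, map_mul, Complex.conj_ofReal, map_ofNat, map_intCast] using this
          have hs0 : Complex.sin ((t - (starRingEnd ℂ) t₀) / 2) = 0 :=
            (hsinzero _ t).mpr ⟨m, htm⟩
          show 2 * Complex.sin ((t - (starRingEnd ℂ) t₀) / 2) = 0
          rw [hs0, mul_zero])
    refine ⟨fun t => h₁ t * h₂ t, Real.log r, hlr, ?_, ?_, ?_⟩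
    · rw [← hS]
      exact fun a ha => (hh₁an a ha).mul (hh₂an a ha)
    · intro t ht
      have htS : t ∈ S := by rw [hS]; exact ht
      exact mul_ne_zero (hh₁ne t htS) (hh₂ne t htS)
    · intro t
      have htS : (t : ℂ) ∈ S := hmemS t
      have e1 := hh₁fac t htS
      have e2 := hh₂fac t htS
      have e3 := hsplit t htS
      have e4 : x = (x.re : ℂ) + (x.im : ℂ) * Complex.I := (Complex.re_add_im x).symm
      have e5 : (starRingEnd ℂ) x = (x.re : ℂ) - (x.im : ℂ) * Complex.I := by
        apply Complex.ext <;> simp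
      have e6 : Gh (t : ℂ) = g₁ t - Complex.I * g₂ t := rfl
      have c1 : ((x.re : ℂ) - g₁ t) + Complex.I * ((x.im : ℂ) - g₂ t)
          = h₁ t * (2 * Complex.sin (((t : ℂ) - t₀) / 2)) := by
        linear_combination e1 - e4 + e3
      have c2 : ((x.re : ℂ) - g₁ t) - Complex.I * ((x.im : ℂ) - g₂ t)
          = h₂ t * (2 * Complex.sin (((t : ℂ) - (starRingEnd ℂ) t₀) / 2)) := by
        linear_combination e2 - e5 + e6
      linear_combination ((x.im : ℂ) - g₂ t) ^ 2 * Complex.I_sq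
        + (((x.re : ℂ) - g₁ t) - Complex.I * ((x.im : ℂ) - g₂ t)) * c1
        + (h₁ t * (2 * Complex.sin (((t : ℂ) - t₀) / 2))) * c2
end
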